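/- Let 𝕆 denote the octonions. For all octonions a, x, y, the second Moufang identity holds: a·(x·(a·y)) = ((a·x)·a)·y. -/

import Mathlib

noncomputable section

/-- The octonions, realized as pairs of quaternions. -/
abbrev Octonion := Quaternion ℝ × Quaternion ℝ

/-- Octonion multiplication: (α₁,α₂)·(β₁,β₂) = (α₁β₁ − β̄₂α₂, β₂α₁ + α₂β̄₁). -/
def omul (a b : Octonion) : Octonion :=
  (a.1 * b.1 - star b.2 * a.2, b.2 * a.1 + a.2 * star b.1)

/-- Octonion conjugation: (α₁,α₂)* = (ᾱ₁, −α₂). -/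
def oconj (a : Octonion) : Octonion := (star a.1, -a.2)

/-- The unit octonion 1 = (1,0). -/
def oone : Octonion := ((1 : Quaternion ℝ), (0 : Quaternion ℝ))

/-- An octonion is purely imaginary if a + a* = 0. -/
def IsPurelyImaginary (a : Octonion) : Prop := a + oconj a = 0

/-- The squared Euclidean norm ‖(α₁,α₂)‖² = ‖α₁‖² + ‖α₂‖². -/
def onormSq (a : Octonion) : ℝ := ‖a.1‖ ^ 2 + ‖a.2‖ ^ 2

/-- The Euclidean norm of an octonion. -/
def onorm (a : Octonion) : ℝ := Real.sqrt (onormSq a)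

/-- An octonion is unitary if its Euclidean norm equals 1. -/
def IsUnitary (a : Octonion) : Prop := onorm a = 1
/-- Second Moufang identity: a·(x·(a·y)) = ((a·x)·a)·y. -/
theorem moufang_two (a x y : Octonion) :
    omul a (omul x (omul a y)) = omul (omul (omul a x) a) y := by
  simp only [omul, Quaternion.re_mul, Quaternion.imI_mul, Quaternion.imJ_mul,
    Quaternion.imK_mul, Quaternion.re_star, Quaternion.imI_star, Quaternion.imJ_star,
    Quaternion.imK_star, Quaternion.re_sub, Quaternion.imI_sub, Quaternion.imJ_sub,
    Quaternion.imK_sub, Quaternion.re_add, Quaternion.imI_add, Quaternion.imJ_add,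
    Quaternion.imK_add, Prod.mk.injEq, Quaternion.ext_iff]
  obtain ⟨⟨a1,a2,a3,a4⟩,⟨a5,a6,a7,a8⟩⟩ := a
  obtain ⟨⟨x1,x2,x3,x4⟩,⟨x5,x6,x7,x8⟩⟩ := x
  obtain ⟨⟨y1,y2,y3,y4⟩,⟨y5,y6,y7,y8⟩⟩ := y
  refine ⟨⟨?_,?_,?_,?_⟩,?_,?_,?_,?_⟩ <;> ring
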